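/- Let β ∈ R⁺∖R_J satisfy ⟨α_j, β∨⟩ ≤ 0 for all j ∈ J. Then every connected component of J contains at most one index j with ⟨α_j, β∨⟩ < 0, and for any such j one has ⟨α_j, β∨⟩ = −1. -/

import Mathlib

/-!
Common setup: an abstract reduced irreducible crystallographic root system `R`
inside a real inner product space `E`, with simple roots `α i` (`i : ι`) forming
a basis of `E`, Weyl group generated by the reflections in the roots
(equivalently, by the simple reflections), coroot pairing
`⟨x, a∨⟩ = 2 (x, a) / (a, a)`, weight lattice `P(R)`, root lattices `Q(R)`,
`Q(R_J)`, etc.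
-/

open scoped BigOperators

noncomputable section

/-- the pairing `⟨x, a∨⟩ = 2 (x, a)/(a, a)` of `x` with the coroot of `a`. -/
def pairR {E : Type} [NormedAddCommGroup E] [InnerProductSpace ℝ E] (x a : E) : ℝ :=
  2 * (inner ℝ x a : ℝ) / (inner ℝ a a : ℝ)

/-- the reflection in (the hyperplane orthogonal to) `a`. -/
def reflFun {E : Type} [NormedAddCommGroup E] [InnerProductSpace ℝ E] (a : E) (x : E) : E :=
  x - pairR x a • a

/-- A reduced irreducible crystallographic root system in a real inner product
space `E`, whose set of simple roots `simple : ι → E` is a basis of `E`. -/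
structure RootSystemCtx (ι E : Type) [Fintype ι] [DecidableEq ι]
    [NormedAddCommGroup E] [InnerProductSpace ℝ E] : Type where
  Roots : Set E
  simple : ι → E
  simple_mem : ∀ i, simple i ∈ Roots
  finite : Roots.Finite
  ne_zero : ∀ a ∈ Roots, a ≠ 0
  reduced : ∀ a ∈ Roots, ∀ t : ℝ, t • a ∈ Roots → t = 1 ∨ t = -1
  crystal : ∀ a ∈ Roots, ∀ b ∈ Roots, ∃ n : ℤ, pairR a b = (n : ℝ)
  refl_stable : ∀ a ∈ Roots, ∀ b ∈ Roots, reflFun b a ∈ Roots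
  indep : LinearIndependent ℝ simple
  span_top : Submodule.span ℝ (Set.range simple) = ⊤
  pos_neg : ∀ a ∈ Roots, (∃ c : ι → ℕ, a = ∑ i, (c i : ℝ) • simple i) ∨
      (∃ c : ι → ℕ, a = -∑ i, (c i : ℝ) • simple i)
  irred : ∀ R1 R2 : Set E, Roots = R1 ∪ R2 →
      (∀ a ∈ R1, ∀ b ∈ R2, (inner ℝ a b : ℝ) = 0) → R1 = ∅ ∨ R2 = ∅

namespace RootSystemCtx

variable {ι E : Type} [Fintype ι] [DecidableEq ι]
  [NormedAddCommGroup E] [InnerProductSpace ℝ E]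
variable (S : RootSystemCtx ι E)

/-- `R` is simply laced: `⟨a, b∨⟩ ∈ {-1, 0, 1}` for roots `b ≠ ± a`. -/
def SimplyLaced : Prop :=
  ∀ a ∈ S.Roots, ∀ b ∈ S.Roots, b ≠ a → b ≠ -a →
    pairR a b = -1 ∨ pairR a b = 0 ∨ pairR a b = 1

/-- membership in the weight lattice `P(R)`. -/
def IsWeight (x : E) : Prop := ∀ a ∈ S.Roots, ∃ n : ℤ, pairR x a = (n : ℝ)

/-- `x` is dominant: `⟨x, αᵢ∨⟩ ≥ 0` for all simple roots. -/
def IsDominant (x : E) : Prop := ∀ i, 0 ≤ pairR x (S.simple i)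

/-- positive roots: roots that are nonnegative combinations of simple roots. -/
def IsPositiveRoot (a : E) : Prop :=
  a ∈ S.Roots ∧ ∃ c : ι → ℕ, a = ∑ i, (c i : ℝ) • S.simple i

/-- the root lattice `Q(R)`. -/
def rootLattice : AddSubgroup E := AddSubgroup.closure S.Roots

/-- the root lattice `Q(R_J)` of the sub-root system `R_J`. -/
def rootLatticeJ (J : Finset ι) : AddSubgroup E :=
  AddSubgroup.closure (S.simple '' ↑J)

/-- the sub-root system `R_J` determined by the simple roots `α_j`, `j ∈ J`. -/
def RootsJ (J : Finset ι) : Set E :=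
  {a | a ∈ S.Roots ∧ a ∈ Submodule.span ℝ (S.simple '' ↑J)}

/-- `x` is `J`-dominant. -/
def IsJDominant (J : Finset ι) (x : E) : Prop := ∀ j ∈ J, 0 ≤ pairR x (S.simple j)

/-- `x` is `J`-minuscule: `⟨x, a∨⟩ ∈ {-1,0,1}` for all `a ∈ R_J`. -/
def IsJMinuscule (J : Finset ι) (x : E) : Prop :=
  ∀ a ∈ S.RootsJ J, pairR x a = -1 ∨ pairR x a = 0 ∨ pairR x a = 1

/-- the action of a word `[i₁, …, i_t]` of simple reflections:
`s_{i₁} ∘ ⋯ ∘ s_{i_t}`. -/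
def wordAct (l : List ι) : E → E :=
  l.foldr (fun i f => reflFun (S.simple i) ∘ f) id

/-- membership in the Weyl group `W` (generated by the simple reflections). -/
def InWeyl (w : E → E) : Prop := ∃ l : List ι, S.wordAct l = w

/-- the Weyl group orbit `W x`. -/
def weylOrbit (x : E) : Set E := {y | ∃ l : List ι, y = S.wordAct l x}

/-- a word is reduced if no shorter word gives the same Weyl group element. -/
def IsReducedWord (l : List ι) : Prop :=
  ∀ l' : List ι, S.wordAct l' = S.wordAct l → l.length ≤ l'.length

/-- `w ∈ W` is `λ`-minuscule: some (equivalently, any) reduced expression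
`w = s_{i₁} ⋯ s_{i_t}` satisfies
`⟨s_{i_{r+1}} ⋯ s_{i_t} λ, α_{i_r}∨⟩ = -1` for all `1 ≤ r ≤ t`. -/
def IsMinusculeFor (lam : E) (w : E → E) : Prop :=
  ∃ l : List ι, S.wordAct l = w ∧ S.IsReducedWord l ∧
    ∀ r : Fin l.length,
      pairR (S.wordAct (l.drop (r + 1)) lam) (S.simple (l.get r)) = -1

/-- the basis of simple roots. -/
def simpleBasis : Module.Basis ι ℝ E := Module.Basis.mk S.indep S.span_top.ge

/-- `⟨x, ωᵢ⟩`: the pairing with the fundamental coweight `ωᵢ` dual to `αᵢ`,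
i.e. the `i`-th coordinate of `x` in the basis of simple roots. -/
def coweightPair (x : E) (i : ι) : ℝ := S.simpleBasis.repr x i

end RootSystemCtx

section AuxLemmas

variable {ι E : Type} [Fintype ι] [DecidableEq ι]
  [NormedAddCommGroup E] [InnerProductSpace ℝ E] (S : RootSystemCtx ι E)

lemma aux_pos_of_ne_zero {a : E} (ha : a ≠ 0) : 0 < (inner ℝ a a : ℝ) :=
  lt_of_le_of_ne real_inner_self_nonneg
    (fun h => ha ((inner_self_eq_zero (𝕜 := ℝ)).mp h.symm))

lemma aux_ipos {a : E} (ha : a ∈ S.Roots) : 0 < (inner ℝ a a : ℝ) :=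
  aux_pos_of_ne_zero (S.ne_zero a ha)

lemma aux_indep_coeff {c d : ι → ℝ}
    (h : ∑ k, c k • S.simple k = ∑ k, d k • S.simple k) : ∀ k, c k = d k := by
  have h2 : ∑ k, (c k - d k) • S.simple k = 0 := by
    simp only [sub_smul, Finset.sum_sub_distrib, h, sub_self]
  intro k
  have := Fintype.linearIndependent_iff.mp S.indep _ h2 k
  linarith

lemma aux_simple_ne_neg (i j : ι) : S.simple i ≠ -S.simple j := by
  intro h
  have hsum : S.simple i + S.simple j = 0 := by rw [h]; simp
  have hform : ∑ k, ((if k = i then (1:ℝ) else 0) + (if k = j then 1 else 0)) • S.simple k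
      = S.simple i + S.simple j := by
    simp [add_smul, Finset.sum_add_distrib, ite_smul]
  have key : ∀ k, ((if k = i then (1:ℝ) else 0) + (if k = j then 1 else 0)) = (fun _ => (0:ℝ)) k := by
    apply aux_indep_coeff S
    rw [hform, hsum]
    simp
  have hki := key i
  simp only [if_pos rfl] at hki
  split_ifs at hki <;> norm_num at hki

lemma aux_pairR_neg {a b : E} (hb : 0 < (inner ℝ b b : ℝ))
    (hmem : pairR a b = -1 ∨ pairR a b = 0 ∨ pairR a b = 1)
    (hlt : (inner ℝ a b : ℝ) < 0) : 2 * (inner ℝ a b : ℝ) = -(inner ℝ b b : ℝ) := by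
  have hbne : (inner ℝ b b : ℝ) ≠ 0 := ne_of_gt hb
  unfold pairR at hmem
  rcases hmem with h | h | h
  · have := (div_eq_iff hbne).mp h; linarith
  · have := (div_eq_iff hbne).mp h; linarith
  · have := (div_eq_iff hbne).mp h; linarith

lemma aux_sub_not_root {i j : ι} (hij : i ≠ j) : S.simple i - S.simple j ∉ S.Roots := by
  intro hroot
  have hform : ∑ k, ((if k = i then (1:ℝ) else 0) - (if k = j then 1 else 0)) • S.simple k
      = S.simple i - S.simple j := by
    simp [sub_smul, Finset.sum_sub_distrib, ite_smul]
  rcases S.pos_neg _ hroot with ⟨c, hc⟩ | ⟨c, hc⟩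
  · have key := aux_indep_coeff S (c := fun k => (if k = i then (1:ℝ) else 0) - (if k = j then 1 else 0))
      (d := fun k => (c k : ℝ)) (by rw [hform, ← hc])
    have hkj := key j
    simp only [if_neg (Ne.symm hij), if_pos rfl, if_true] at hkj
    norm_num at hkj
    have : (0:ℝ) ≤ (c j : ℝ) := Nat.cast_nonneg _
    linarith
  · have hneg : ∑ k, (-(c k : ℝ)) • S.simple k = S.simple i - S.simple j := by
      rw [hc]; simp [neg_smul, Finset.sum_neg_distrib]
    have key := aux_indep_coeff S (c := fun k => (if k = i then (1:ℝ) else 0) - (if k = j then 1 else 0))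
      (d := fun k => -(c k : ℝ)) (by rw [hform, hneg])
    have hki := key i
    simp only [if_pos rfl, if_neg hij, if_true] at hki
    norm_num at hki
    have : (0:ℝ) ≤ (c i : ℝ) := Nat.cast_nonneg _
    linarith

lemma aux_simple_inner_nonpos (hSL : S.SimplyLaced) {i j : ι} (hij : i ≠ j) :
    (inner ℝ (S.simple i) (S.simple j) : ℝ) ≤ 0 := by
  have hjj : 0 < (inner ℝ (S.simple j) (S.simple j) : ℝ) := aux_ipos S (S.simple_mem j)
  have hne1 : S.simple j ≠ S.simple i := fun h => hij (S.indep.injective h).symm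
  have hne2 : S.simple j ≠ -S.simple i := aux_simple_ne_neg S j i
  rcases hSL (S.simple i) (S.simple_mem i) (S.simple j) (S.simple_mem j) hne1 hne2 with h | h | h
  · unfold pairR at h
    have := (div_eq_iff (ne_of_gt hjj)).mp h
    linarith
  · unfold pairR at h
    have := (div_eq_iff (ne_of_gt hjj)).mp h
    linarith
  · exfalso
    have hrefl := S.refl_stable (S.simple i) (S.simple_mem i) (S.simple j) (S.simple_mem j)
    unfold reflFun at hrefl
    rw [h, one_smul] at hrefl
    exact aux_sub_not_root S hij hrefl

lemma aux_adj (hSL : S.SimplyLaced) {i j : ι} (hij : i ≠ j)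
    (hne : (inner ℝ (S.simple i) (S.simple j) : ℝ) ≠ 0) :
    2 * (inner ℝ (S.simple i) (S.simple j) : ℝ) = -(inner ℝ (S.simple i) (S.simple i) : ℝ) ∧
    (inner ℝ (S.simple i) (S.simple i) : ℝ) = (inner ℝ (S.simple j) (S.simple j) : ℝ) := by
  have hii : 0 < (inner ℝ (S.simple i) (S.simple i) : ℝ) := aux_ipos S (S.simple_mem i)
  have hjj : 0 < (inner ℝ (S.simple j) (S.simple j) : ℝ) := aux_ipos S (S.simple_mem j)
  have hlt : (inner ℝ (S.simple i) (S.simple j) : ℝ) < 0 :=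
    lt_of_le_of_ne (aux_simple_inner_nonpos S hSL hij) hne
  have h1 : 2 * (inner ℝ (S.simple i) (S.simple j) : ℝ) = -(inner ℝ (S.simple j) (S.simple j) : ℝ) := by
    refine aux_pairR_neg hjj ?_ hlt
    exact hSL (S.simple i) (S.simple_mem i) (S.simple j) (S.simple_mem j)
      (fun h => hij (S.indep.injective h).symm) (aux_simple_ne_neg S j i)
  have hlt2 : (inner ℝ (S.simple j) (S.simple i) : ℝ) < 0 := by rwa [real_inner_comm]
  have h2 : 2 * (inner ℝ (S.simple j) (S.simple i) : ℝ) = -(inner ℝ (S.simple i) (S.simple i) : ℝ) := by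
    refine aux_pairR_neg hii ?_ hlt2
    exact hSL (S.simple j) (S.simple_mem j) (S.simple i) (S.simple_mem i)
      (fun h => hij (S.indep.injective h)) (aux_simple_ne_neg S i j)
  have hcomm : (inner ℝ (S.simple j) (S.simple i) : ℝ) = inner ℝ (S.simple i) (S.simple j) :=
    real_inner_comm _ _
  constructor <;> linarith

end AuxLemmas

/-- (simply-laced case) Let `β ∈ R⁺ \ R_J` satisfy
`⟨α_j, β∨⟩ ≤ 0` for all `j ∈ J`. Then every connected component of `J` (for the
Dynkin-diagram adjacency, i.e. the relation of non-orthogonality of distinct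
simple roots, restricted to `J`) contains at most one index `j` with
`⟨α_j, β∨⟩ < 0`, and for any such `j` one has `⟨α_j, β∨⟩ = -1`. -/
theorem component_at_most_one_negative
    {ι E : Type} [Fintype ι] [DecidableEq ι]
    [NormedAddCommGroup E] [InnerProductSpace ℝ E]
    (S : RootSystemCtx ι E) (hSL : S.SimplyLaced)
    (J : Finset ι) (hJne : J.Nonempty) (hJprop : J ≠ Finset.univ)
    (β : E) (hβpos : S.IsPositiveRoot β) (hβJ : β ∉ S.RootsJ J)
    (hneg : ∀ j ∈ J, pairR (S.simple j) β ≤ 0) :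
    (∀ j₁ ∈ J, ∀ j₂ ∈ J,
        pairR (S.simple j₁) β < 0 → pairR (S.simple j₂) β < 0 →
        Relation.ReflTransGen
          (fun i i' : ι => i ∈ J ∧ i' ∈ J ∧ i ≠ i' ∧
            (inner ℝ (S.simple i) (S.simple i') : ℝ) ≠ 0) j₁ j₂ →
        j₁ = j₂) ∧
      ∀ j ∈ J, pairR (S.simple j) β < 0 → pairR (S.simple j) β = -1 := by
  obtain ⟨hβR, c, hc⟩ := hβpos
  have hβspan : β ∉ Submodule.span ℝ (S.simple '' ↑J) := fun h => hβJ ⟨hβR, h⟩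
  set N : ℝ := (inner ℝ β β : ℝ) with hNdef
  have hNpos : 0 < N := aux_ipos S hβR
  have hsspan : ∀ j ∈ J, S.simple j ∈ Submodule.span ℝ (S.simple '' ↑J) :=
    fun j hj => Submodule.subset_span ⟨j, hj, rfl⟩
  have hβnea : ∀ j ∈ J, β ≠ S.simple j ∧ β ≠ -S.simple j := by
    intro j hj
    constructor
    · rintro rfl; exact hβspan (hsspan j hj)
    · intro h; apply hβspan; rw [h]; exact Submodule.neg_mem _ (hsspan j hj)
  have hane : ∀ j ∈ J, S.simple j ≠ β ∧ S.simple j ≠ -β := by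
    intro j hj
    refine ⟨fun h => (hβnea j hj).1 h.symm, fun h => (hβnea j hj).2 ?_⟩
    rw [h, neg_neg]
  have hβJnonpos : ∀ j ∈ J, (inner ℝ β (S.simple j) : ℝ) ≤ 0 := by
    intro j hj
    have h1 := hneg j hj
    unfold pairR at h1
    rw [real_inner_comm]
    rcases div_nonpos_iff.mp h1 with ⟨h2, h3⟩ | ⟨h2, h3⟩ <;> linarith
  have hend : ∀ j ∈ J, pairR (S.simple j) β < 0 →
      2 * (inner ℝ β (S.simple j) : ℝ) = -N ∧ (inner ℝ (S.simple j) (S.simple j) : ℝ) = N := by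
    intro j hj hlt
    have haa : 0 < (inner ℝ (S.simple j) (S.simple j) : ℝ) := aux_ipos S (S.simple_mem j)
    have hip : (inner ℝ (S.simple j) β : ℝ) < 0 := by
      unfold pairR at hlt
      rcases div_neg_iff.mp hlt with ⟨h1, h2⟩ | ⟨h1, h2⟩ <;> linarith
    have hsl1 := hSL (S.simple j) (S.simple_mem j) β hβR (hβnea j hj).1 (hβnea j hj).2
    have h1 : 2 * (inner ℝ (S.simple j) β : ℝ) = -N := aux_pairR_neg hNpos hsl1 hip
    have hip2 : (inner ℝ β (S.simple j) : ℝ) < 0 := by rwa [real_inner_comm]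
    have hsl2 := hSL β hβR (S.simple j) (S.simple_mem j) (hane j hj).1 (hane j hj).2
    have h2 : 2 * (inner ℝ β (S.simple j) : ℝ) = -(inner ℝ (S.simple j) (S.simple j) : ℝ) :=
      aux_pairR_neg haa hsl2 hip2
    have hcomm : (inner ℝ β (S.simple j) : ℝ) = inner ℝ (S.simple j) β := real_inner_comm _ _
    constructor <;> linarith
  have key2 : ∀ j ∈ J, pairR (S.simple j) β < 0 → pairR (S.simple j) β = -1 := by
    intro j hj hlt
    obtain ⟨h1, -⟩ := hend j hj hlt
    have hcomm : (inner ℝ β (S.simple j) : ℝ) = inner ℝ (S.simple j) β := real_inner_comm _ _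
    unfold pairR
    rw [div_eq_iff (ne_of_gt hNpos)]
    linarith
  refine ⟨?_, key2⟩
  intro j₁ hj₁ j₂ hj₂ hlt₁ hlt₂ hrel
  by_contra hne12
  let G : SimpleGraph ι :=
    { Adj := fun i i' => i ∈ J ∧ i' ∈ J ∧ i ≠ i' ∧ (inner ℝ (S.simple i) (S.simple i') : ℝ) ≠ 0,
      symm := by
        constructor
        rintro a b ⟨h1, h2, h3, h4⟩
        exact ⟨h2, h1, h3.symm, by rwa [real_inner_comm]⟩,
      loopless := by constructor; rintro a ⟨-, -, h, -⟩; exact h rfl }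
  have hreach : G.Reachable j₁ j₂ := (G.reachable_iff_reflTransGen j₁ j₂).mpr hrel
  obtain ⟨w⟩ := hreach
  set p := w.toPath with hp
  set l : List ι := (p : G.Walk j₁ j₂).support with hl
  have hchain : l.IsChain G.Adj := SimpleGraph.Walk.isChain_adj_support _
  have hnodup : l.Nodup := p.property.support_nodup
  have hlne : l ≠ [] := SimpleGraph.Walk.support_ne_nil _
  set n : ℕ := l.length with hn
  have hn1 : 0 < n := List.length_pos_iff.mpr hlne
  set idx : ℕ → ι := fun r => l.getD r j₁ with hidxdef
  have hidx : ∀ r (h : r < n), idx r = l.get ⟨r, h⟩ := fun r h => List.getD_eq_get _ _ ⟨r, h⟩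
  have hg0 : idx 0 = j₁ := by
    have h1 : l.head hlne = j₁ := SimpleGraph.Walk.head_support _
    exact (hidx 0 hn1).trans (List.get_eq_getElem.trans
      ((List.head_eq_getElem_zero hlne).symm.trans h1))
  have hglast : idx (n - 1) = j₂ := by
    have h1 : l.getLast hlne = j₂ := SimpleGraph.Walk.getLast_support _
    exact (hidx (n - 1) (by omega)).trans (List.get_eq_getElem.trans
      (((List.getLast_eq_getElem hlne).symm).trans h1))
  have hinj : ∀ r s, r < n → s < n → r ≠ s → idx r ≠ idx s := by
    intro r s hr hs hrs heq
    rw [hidx r hr, hidx s hs] at heq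
    have := List.nodup_iff_injective_get.mp hnodup heq
    exact hrs (by simpa using congrArg Fin.val this)
  have hadj : ∀ r, r + 1 < n → G.Adj (idx r) (idx (r + 1)) := by
    intro r h
    rw [hidx r (by omega), hidx (r + 1) h]
    exact List.isChain_iff_getElem.mp hchain r h
  have hn2 : 2 ≤ n := by
    by_contra h
    have hne1 : n = 1 := by omega
    apply hne12
    rw [← hg0, ← hglast, hne1]
  have hmemJ : ∀ r, r < n → idx r ∈ J := by
    intro r hr
    rcases Nat.lt_or_ge (r + 1) n with h | h
    · exact (hadj r h).1
    · have h1 : r - 1 + 1 < n := by omega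
      have := (hadj (r - 1) h1).2.1
      rwa [show r - 1 + 1 = r by omega] at this
  have hnorm : ∀ r, r < n → (inner ℝ (S.simple (idx r)) (S.simple (idx r)) : ℝ) = N := by
    intro r
    induction r with
    | zero => intro _; rw [hg0]; exact (hend j₁ hj₁ hlt₁).2
    | succ m ih =>
      intro hm
      have hadjm := hadj m hm
      have h2 := (aux_adj S hSL hadjm.2.2.1 hadjm.2.2.2).2
      rw [← h2]
      exact ih (by omega)
  have hcons : ∀ r, r + 1 < n → 2 * (inner ℝ (S.simple (idx r)) (S.simple (idx (r + 1))) : ℝ) = -N := by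
    intro r h
    have hadjr := hadj r h
    have h1 := (aux_adj S hSL hadjr.2.2.1 hadjr.2.2.2).1
    rw [h1, hnorm r (by omega)]
  have hoff : ∀ r s, r < n → s < n → r ≠ s →
      (inner ℝ (S.simple (idx r)) (S.simple (idx s)) : ℝ) ≤ 0 :=
    fun r s hr hs hrs => aux_simple_inner_nonpos S hSL (hinj r s hr hs hrs)
  have hβterm : ∀ r, r < n → (inner ℝ β (S.simple (idx r)) : ℝ) ≤ 0 :=
    fun r hr => hβJnonpos (idx r) (hmemJ r hr)
  have hb0 : 2 * (inner ℝ β (S.simple (idx 0)) : ℝ) = -N := by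
    rw [hg0]; exact (hend j₁ hj₁ hlt₁).1
  have hblast : 2 * (inner ℝ β (S.simple (idx (n - 1))) : ℝ) = -N := by
    rw [hglast]; exact (hend j₂ hj₂ hlt₂).1
  set X : ℕ → E := fun k => β + ∑ r ∈ Finset.range k, S.simple (idx r) with hX
  have hstep : ∀ k, X (k + 1) = X k + S.simple (idx k) := by
    intro k
    simp only [hX, Finset.sum_range_succ, add_assoc]
  have hXinner : ∀ k, (inner ℝ (X k) (S.simple (idx k)) : ℝ)
      = inner ℝ β (S.simple (idx k))
        + ∑ r ∈ Finset.range k, (inner ℝ (S.simple (idx r)) (S.simple (idx k)) : ℝ) := by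
    intro k
    simp only [hX, inner_add_left, sum_inner]
  have main : ∀ k, 1 ≤ k → k ≤ n →
      (inner ℝ (X k) (X k) : ℝ) ≤ 2 * N + 2 * ∑ r ∈ Finset.range k, (inner ℝ β (S.simple (idx r)) : ℝ) := by
    intro k hk
    induction k, hk using Nat.le_induction with
    | base =>
      intro _
      have hX1 : X 1 = β + S.simple (idx 0) := by simp [hX]
      rw [hX1, real_inner_add_add_self]
      have h0 : (inner ℝ (S.simple (idx 0)) (S.simple (idx 0)) : ℝ) = N := hnorm 0 (by omega)
      rw [Finset.sum_range_one]
      rw [← hNdef, h0]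
      ring_nf
      linarith
    | succ k hk ih =>
      intro hkn
      obtain ⟨m, rfl⟩ : ∃ m, k = m + 1 := ⟨k - 1, by omega⟩
      have hmn : m + 1 < n := by omega
      have ihk := ih (by omega)
      rw [hstep, real_inner_add_add_self]
      have hsum : ∑ r ∈ Finset.range (m + 1),
          (inner ℝ (S.simple (idx r)) (S.simple (idx (m + 1))) : ℝ)
          ≤ -N / 2 := by
        rw [Finset.sum_range_succ]
        have h1 : ∑ r ∈ Finset.range m,
            (inner ℝ (S.simple (idx r)) (S.simple (idx (m + 1))) : ℝ) ≤ 0 := by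
          apply Finset.sum_nonpos
          intro r hr
          have hr' : r < m := Finset.mem_range.mp hr
          exact hoff r (m + 1) (by omega) hmn (by omega)
        have h2 := hcons m hmn
        linarith
      have hxk := hXinner (m + 1)
      have hnk : (inner ℝ (S.simple (idx (m + 1))) (S.simple (idx (m + 1))) : ℝ) = N :=
        hnorm (m + 1) hmn
      rw [Finset.sum_range_succ]
      rw [hnk]
      linarith
  have hfinal := main n (by omega) le_rfl
  have hsumβ : ∑ r ∈ Finset.range n, (inner ℝ β (S.simple (idx r)) : ℝ)
      ≤ (inner ℝ β (S.simple (idx 0)) : ℝ) + (inner ℝ β (S.simple (idx (n - 1))) : ℝ) := by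
    obtain ⟨m, hm⟩ : ∃ m, n = m + 1 := ⟨n - 1, by omega⟩
    have hm1 : 1 ≤ m := by omega
    rw [hm, Finset.sum_range_succ, Nat.add_sub_cancel]
    have h0m : (0 : ℕ) ∈ Finset.range m := Finset.mem_range.mpr (by omega)
    have hsplit := Finset.add_sum_erase (Finset.range m)
      (fun r => (inner ℝ β (S.simple (idx r)) : ℝ)) h0m
    have herase : ∑ r ∈ (Finset.range m).erase 0, (inner ℝ β (S.simple (idx r)) : ℝ) ≤ 0 := by
      apply Finset.sum_nonpos
      intro r hr
      have : r < m := Finset.mem_range.mp (Finset.mem_of_mem_erase hr)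
      exact hβterm r (by omega)
    have h1 : ∑ r ∈ Finset.range m, (inner ℝ β (S.simple (idx r)) : ℝ)
        ≤ (inner ℝ β (S.simple (idx 0)) : ℝ) := by
      rw [← hsplit]; linarith
    linarith
  have hXn : (inner ℝ (X n) (X n) : ℝ) ≤ 0 := by linarith
  have hXne : X n ≠ 0 := by
    intro h0
    apply hβspan
    have hb : β = -∑ r ∈ Finset.range n, S.simple (idx r) := by
      have := h0
      rw [hX] at this
      exact eq_neg_of_add_eq_zero_left this
    rw [hb]
    refine Submodule.neg_mem _ (Submodule.sum_mem _ fun r hr => Submodule.subset_span ?_)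
    exact ⟨idx r, hmemJ r (Finset.mem_range.mp hr), rfl⟩
  exact absurd hXn (not_le.mpr (aux_pos_of_ne_zero hXne))
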